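/- arXiv:2210.07606 — 5 statements merged into one kernel-verified Lean document; each statement's English description precedes it below -/
import Mathlib

section
/- Let N be a positive natural number, let be an N×N real matrix that is row-stochastic (all entries nonnegative and every row sums to 1), and let Z be an N×2 real matrix each of whose rows is a standard basis vector of ℝ² (a one-hot label matrix with C = 2 classes). Define the post-diversification similarity matrix S(I−Â,Z) = (I−Â)·Z·Zᵀ·(I−Â)ᵀ. Then for any two indices v, u with different labels (i.e., row v of Z is not equal to row u of Z), the entry S(I−Â,Z)_{v,u} is ≤ 0. -/
open Matrix Finset

/-- For a row-stochastic `Â` and a one-hot label matrix `Z` with 2 classes, the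
post-diversification similarity `S(I−Â,Z) = (I−Â)ZZᵀ(I−Â)ᵀ` is nonpositive at any
pair of differently-labeled nodes. -/
theorem stmt_0 (N : ℕ) (hN : 0 < N)
    (A : Matrix (Fin N) (Fin N) ℝ)
    (hA_nonneg : ∀ i j, 0 ≤ A i j)
    (hA_rowsum : ∀ i, ∑ j, A i j = 1)
    (Z : Matrix (Fin N) (Fin 2) ℝ)
    (hZ : ∀ v, ∃ k : Fin 2, ∀ c, Z v c = if c = k then 1 else 0)
    (v u : Fin N) (hvu : Z v ≠ Z u) :
    ((1 - A) * Z * Zᵀ * (1 - A)ᵀ : Matrix (Fin N) (Fin N) ℝ) v u ≤ 0 := by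
  set B : Matrix (Fin N) (Fin 2) ℝ := (1 - A) * Z with hBdef
  -- rows of Z sum to 1
  have hrow : ∀ j, Z j 0 + Z j 1 = 1 := by
    intro j
    obtain ⟨k, hk⟩ := hZ j
    fin_cases k <;> simp [hk]
  have hZ01 : ∀ j, Z j 0 = 0 ∨ Z j 0 = 1 := by
    intro j
    obtain ⟨k, hk⟩ := hZ j
    fin_cases k <;> simp [hk]
  -- formula for B w 0
  have hB0 : ∀ w, B w 0 = Z w 0 - ∑ j, A w j * Z j 0 := by
    intro w
    simp only [hBdef, mul_apply, Matrix.sub_apply, one_apply, sub_mul, Finset.sum_sub_distrib]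
    congr 1
    simp [ite_mul]
  -- B w 1 = - B w 0
  have hB1 : ∀ w, B w 1 = - B w 0 := by
    intro w
    have hsum : B w 0 + B w 1 = 0 := by
      simp only [hBdef, mul_apply, ← Finset.sum_add_distrib, ← mul_add]
      have : ∀ j, ((1 - A) : Matrix (Fin N) (Fin N) ℝ) w j * (Z j 0 + Z j 1)
          = ((1 - A) : Matrix (Fin N) (Fin N) ℝ) w j := by
        intro j; rw [hrow j, mul_one]
      rw [Finset.sum_congr rfl fun j _ => this j]
      rw [Finset.sum_congr rfl fun j _ => (show ((1 - A) : Matrix (Fin N) (Fin N) ℝ) w j = (1 : Matrix (Fin N) (Fin N) ℝ) w j - A w j from rfl)]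
      simp only [Matrix.sub_apply, one_apply, Finset.sum_sub_distrib, hA_rowsum w]
      simp
    linarith
  -- the entry equals 2 * (B v 0 * B u 0)
  have hentry : ((1 - A) * Z * Zᵀ * (1 - A)ᵀ : Matrix (Fin N) (Fin N) ℝ) v u = 2 * (B v 0 * B u 0) := by
    have h1 : ((1 - A) * Z * Zᵀ * (1 - A)ᵀ : Matrix (Fin N) (Fin N) ℝ) = B * Bᵀ := by
      rw [hBdef, transpose_mul, ← Matrix.mul_assoc]
    rw [h1, mul_apply, Fin.sum_univ_two]
    simp only [transpose_apply, hB1]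
    ring
  rw [hentry]
  -- sum bound: 0 ≤ ∑ A w j * Z j 0 ≤ 1
  have hs_nonneg : ∀ w, 0 ≤ ∑ j, A w j * Z j 0 := by
    intro w
    apply Finset.sum_nonneg
    intro j _
    rcases hZ01 j with h | h <;> simp [h, hA_nonneg w j]
  have hs_le : ∀ w, ∑ j, A w j * Z j 0 ≤ 1 := by
    intro w
    rw [← hA_rowsum w]
    apply Finset.sum_le_sum
    intro j _
    rcases hZ01 j with h | h <;> simp [h, hA_nonneg w j]
  -- differently labeled: Z v 0 ≠ Z u 0
  have hne : Z v 0 ≠ Z u 0 := by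
    intro h
    apply hvu
    funext c
    fin_cases c
    · exact h
    · show Z v 1 = Z u 1
      have := hrow v; have := hrow u; linarith
  rcases hZ01 v with hv | hv <;> rcases hZ01 u with hu | hu
  · exact absurd (hv.trans hu.symm) hne
  · have h1 : B v 0 ≤ 0 := by rw [hB0, hv]; linarith [hs_nonneg v]
    have h2 : 0 ≤ B u 0 := by rw [hB0, hu]; linarith [hs_le u]
    nlinarith
  · have h1 : 0 ≤ B v 0 := by rw [hB0, hv]; linarith [hs_le v]
    have h2 : B u 0 ≤ 0 := by rw [hB0, hu]; linarith [hs_nonneg u]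
    nlinarith
  · exact absurd (hv.trans hu.symm) hne
end

section
/- Let N and C be positive natural numbers, let be an N×N real row-stochastic matrix (all entries nonnegative, every row sums to 1), and let Z be an N×C one-hot label matrix (every row is a standard basis vector of ℝ^C). Then for any two indices v, u with the same label (row v of Z equals row u of Z), the entry of S(I−Â,Z) = (I−Â)ZZᵀ(I−Â)ᵀ at position (v,u) is ≥ 0. -/
open Matrix Finset

/-- For a row-stochastic `Â` and a one-hot label matrix `Z` with `C` classes, the
post-diversification similarity `S(I−Â,Z) = (I−Â)ZZᵀ(I−Â)ᵀ` is nonnegative at any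
pair of same-labeled nodes. -/
theorem stmt_1 (N C : ℕ) (hN : 0 < N) (hC : 0 < C)
    (A : Matrix (Fin N) (Fin N) ℝ)
    (hA_nonneg : ∀ i j, 0 ≤ A i j)
    (hA_rowsum : ∀ i, ∑ j, A i j = 1)
    (Z : Matrix (Fin N) (Fin C) ℝ)
    (hZ : ∀ v, ∃ k : Fin C, ∀ c, Z v c = if c = k then 1 else 0)
    (v u : Fin N) (hvu : Z v = Z u) :
    0 ≤ ((1 - A) * Z * Zᵀ * (1 - A)ᵀ : Matrix (Fin N) (Fin N) ℝ) v u := by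
  set M : Matrix (Fin N) (Fin C) ℝ := (1 - A) * Z with hM
  have hZ01 : ∀ i k, Z i k = 0 ∨ Z i k = 1 := by
    intro i k
    obtain ⟨c, hc⟩ := hZ i
    rw [hc]
    by_cases h : k = c <;> simp [h]
  have hZnn : ∀ i k, 0 ≤ Z i k := by
    intro i k; rcases hZ01 i k with h | h <;> simp [h]
  have hZle : ∀ i k, Z i k ≤ 1 := by
    intro i k; rcases hZ01 i k with h | h <;> simp [h]
  have hMval : ∀ w k, M w k = Z w k - ∑ i, A w i * Z i k := by
    intro w k
    simp [hM, Matrix.mul_apply, Matrix.sub_apply, Matrix.one_apply, sub_mul,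
      Finset.sum_sub_distrib, Finset.sum_ite_eq, ite_mul]
  have hsum_nn : ∀ w k, 0 ≤ ∑ i, A w i * Z i k := by
    intro w k
    exact Finset.sum_nonneg fun i _ => mul_nonneg (hA_nonneg w i) (hZnn i k)
  have hsum_le : ∀ w k, ∑ i, A w i * Z i k ≤ 1 := by
    intro w k
    calc ∑ i, A w i * Z i k ≤ ∑ i, A w i := by
          refine Finset.sum_le_sum fun i _ => ?_
          calc A w i * Z i k ≤ A w i * 1 :=
                mul_le_mul_of_nonneg_left (hZle i k) (hA_nonneg w i)
            _ = A w i := mul_one _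
      _ = 1 := hA_rowsum w
  have hkey : ∀ k, 0 ≤ M v k * M u k := by
    intro k
    have hvk := hMval v k
    have huk := hMval u k
    have hZvu : Z v k = Z u k := by rw [hvu]
    rcases hZ01 v k with h0 | h1
    · have h1 : M v k ≤ 0 := by rw [hvk, h0]; linarith [hsum_nn v k]
      have h2 : M u k ≤ 0 := by rw [huk, ← hZvu, h0]; linarith [hsum_nn u k]
      nlinarith
    · apply mul_nonneg
      · rw [hvk, h1]; linarith [hsum_le v k]
      · rw [huk, ← hZvu, h1]; linarith [hsum_le u k]
  have hfact : ((1 - A) * Z * Zᵀ * (1 - A)ᵀ : Matrix (Fin N) (Fin N) ℝ) = M * Mᵀ := by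
    rw [hM, Matrix.transpose_mul, ← Matrix.mul_assoc]
  rw [hfact, Matrix.mul_apply]
  exact Finset.sum_nonneg fun k _ => by simpa [Matrix.transpose_apply] using hkey k
end

section
/- (Theorem 1 of the paper.) Let N be a positive natural number, let be an N×N real row-stochastic matrix (all entries nonnegative, every row sums to 1), and let Z be an N×2 one-hot label matrix (C = 2 classes), where each class is nonempty. Then every node v is diversification distinguishable, i.e., for every index v: the average of S(I−Â,Z)_{v,u} over all u with the same label as v is ≥ 0, and the average of S(I−Â,Z)_{v,u} over all u with a different label from v is ≤ 0. Consequently the graph diversification distinguishability value DD_{Â,Z} — the fraction of nodes that are diversification distinguishable — equals 1. -/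
open Matrix Finset
open scoped Classical

/-- Theorem 1 of the paper: for `C = 2` classes, `X = Z`, and any row-stochastic
aggregation operator `Â`, every node is diversification distinguishable and
`DD_{Â,Z}(G) = 1`. -/
theorem stmt_2 (N : ℕ) (hN : 0 < N)
    (A : Matrix (Fin N) (Fin N) ℝ)
    (hA_nonneg : ∀ i j, 0 ≤ A i j)
    (hA_rowsum : ∀ i, ∑ j, A i j = 1)
    (lab : Fin N → Fin 2)
    (Z : Matrix (Fin N) (Fin 2) ℝ)
    (hZ : ∀ v c, Z v c = if c = lab v then 1 else 0)
    (hne : ∀ k : Fin 2, ∃ v, lab v = k) :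
    (∀ v : Fin N,
      0 ≤ (∑ u ∈ Finset.univ.filter (fun u => lab u = lab v),
            ((1 - A) * Z * Zᵀ * (1 - A)ᵀ : Matrix (Fin N) (Fin N) ℝ) v u) /
          ((Finset.univ.filter (fun u => lab u = lab v)).card : ℝ) ∧
      (∑ u ∈ Finset.univ.filter (fun u => lab u ≠ lab v),
            ((1 - A) * Z * Zᵀ * (1 - A)ᵀ : Matrix (Fin N) (Fin N) ℝ) v u) /
          ((Finset.univ.filter (fun u => lab u ≠ lab v)).card : ℝ) ≤ 0) ∧
    ((Finset.univ.filter (fun v : Fin N =>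
        0 ≤ (∑ u ∈ Finset.univ.filter (fun u => lab u = lab v),
              ((1 - A) * Z * Zᵀ * (1 - A)ᵀ : Matrix (Fin N) (Fin N) ℝ) v u) /
            ((Finset.univ.filter (fun u => lab u = lab v)).card : ℝ) ∧
        (∑ u ∈ Finset.univ.filter (fun u => lab u ≠ lab v),
              ((1 - A) * Z * Zᵀ * (1 - A)ᵀ : Matrix (Fin N) (Fin N) ℝ) v u) /
            ((Finset.univ.filter (fun u => lab u ≠ lab v)).card : ℝ) ≤ 0)).card : ℝ)
      / (N : ℝ) = 1 := by
  have fin2 : ∀ i : Fin 2, i = 0 ∨ i = 1 := by decide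
  set B : Matrix (Fin N) (Fin 2) ℝ := (1 - A) * Z with hB
  have hM : (1 - A) * Z * Zᵀ * (1 - A)ᵀ = B * Bᵀ := by
    rw [hB, Matrix.transpose_mul, Matrix.mul_assoc]
  -- row sums of B are 0
  have hz01 : ∀ j, Z j 0 + Z j 1 = 1 := by
    intro j
    rcases fin2 (lab j) with h | h <;> simp [hZ, h]
  have hrow : ∀ v, B v 1 = - B v 0 := by
    intro v
    have hsum : B v 0 + B v 1 = 0 := by
      have h1 : B v 0 + B v 1 = ∑ j, (1 - A) v j * (Z j 0 + Z j 1) := by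
        simp [hB, Matrix.mul_apply, mul_add, Finset.sum_add_distrib]
      have h2 : ∑ j, (1 - A) v j = 0 := by
        simp [Matrix.sub_apply, Finset.sum_sub_distrib, hA_rowsum,
          Matrix.one_apply]
      rw [h1]
      simp only [hz01, mul_one]
      exact h2
    linarith
  -- sign of B v 0
  have hsign : ∀ v, (lab v = 0 → 0 ≤ B v 0) ∧ (lab v = 1 → B v 0 ≤ 0) := by
    intro v
    have hBv : B v 0 = Z v 0 - ∑ j, A v j * Z j 0 := by
      simp [hB, Matrix.mul_apply, Matrix.sub_apply, sub_mul,
        Finset.sum_sub_distrib, Matrix.one_apply, Finset.sum_ite_eq,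
        Finset.mem_univ]
    have hZ01 : ∀ j, 0 ≤ Z j 0 ∧ Z j 0 ≤ 1 := by
      intro j; rw [hZ]; split <;> norm_num
    have hs_nonneg : 0 ≤ ∑ j, A v j * Z j 0 :=
      Finset.sum_nonneg fun j _ => mul_nonneg (hA_nonneg v j) (hZ01 j).1
    have hs_le : ∑ j, A v j * Z j 0 ≤ 1 := by
      calc ∑ j, A v j * Z j 0 ≤ ∑ j, A v j :=
            Finset.sum_le_sum fun j _ => by
              nlinarith [hA_nonneg v j, (hZ01 j).1, (hZ01 j).2]
        _ = 1 := hA_rowsum v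
    constructor
    · intro h
      have : Z v 0 = 1 := by simp [hZ, h]
      rw [hBv, this]; linarith
    · intro h
      have : Z v 0 = 0 := by simp [hZ, h]
      rw [hBv, this]; linarith
  -- entrywise sign of B * Bᵀ
  have hentry : ∀ v u, (B * Bᵀ) v u = 2 * (B v 0 * B u 0) := by
    intro v u
    simp [Matrix.mul_apply, Fin.sum_univ_two, Matrix.transpose_apply, hrow]
    ring
  have hsame : ∀ v u, lab u = lab v → 0 ≤ (B * Bᵀ) v u := by
    intro v u h
    rw [hentry]
    rcases fin2 (lab v) with hv | hv
    · have hu : lab u = 0 := h.trans hv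
      nlinarith [((hsign v).1 hv), ((hsign u).1 hu)]
    · have hu : lab u = 1 := h.trans hv
      nlinarith [((hsign v).2 hv), ((hsign u).2 hu)]
  have hdiff : ∀ v u, lab u ≠ lab v → (B * Bᵀ) v u ≤ 0 := by
    intro v u h
    rw [hentry]
    rcases fin2 (lab v) with hv | hv
    · have hu : lab u = 1 := by
        rcases fin2 (lab u) with hu | hu
        · exact absurd (hu.trans hv.symm) h
        · exact hu
      nlinarith [((hsign v).1 hv), ((hsign u).2 hu)]
    · have hu : lab u = 0 := by
        rcases fin2 (lab u) with hu | hu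
        · exact hu
        · exact absurd (hu.trans hv.symm) h
      nlinarith [((hsign v).2 hv), ((hsign u).1 hu)]
  rw [hM]
  have hmain : ∀ v : Fin N,
      0 ≤ (∑ u ∈ Finset.univ.filter (fun u => lab u = lab v),
            (B * Bᵀ) v u) /
          ((Finset.univ.filter (fun u => lab u = lab v)).card : ℝ) ∧
      (∑ u ∈ Finset.univ.filter (fun u => lab u ≠ lab v),
            (B * Bᵀ) v u) /
          ((Finset.univ.filter (fun u => lab u ≠ lab v)).card : ℝ) ≤ 0 := by
    intro v
    constructor
    · apply div_nonneg _ (Nat.cast_nonneg _)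
      exact Finset.sum_nonneg fun u hu =>
        hsame v u (Finset.mem_filter.mp hu).2
    · apply div_nonpos_of_nonpos_of_nonneg _ (Nat.cast_nonneg _)
      exact Finset.sum_nonpos fun u hu =>
        hdiff v u (Finset.mem_filter.mp hu).2
  refine ⟨hmain, ?_⟩
  rw [Finset.filter_true_of_mem (fun v _ => hmain v), Finset.card_univ,
    Fintype.card_fin]
  exact div_self (by positivity)
end

section
/- Let N and C be positive natural numbers, let be an N×N real matrix whose rows each sum to 1, and let Z be an N×C one-hot label matrix. Write W = ÂZ, and for a node v let c_v denote the class of v (so row v of Z equals e_{c_v}). Then for any two indices v, u belonging to different classes (c_v ≠ c_u), the entry of S(I−Â,Z) = (I−Â)ZZᵀ(I−Â)ᵀ at position (v,u) equals (Σ_{c=1}^{C} W_{v,c}·W_{u,c}) − W_{v,c_u} − W_{u,c_v}. -/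
open Matrix Finset

/-- With `W = ÂZ` and nodes `v, u` in different classes, the entry of
`S(I−Â,Z) = (I−Â)ZZᵀ(I−Â)ᵀ` is `∑_c W_{v,c} W_{u,c} − W_{v,c_u} − W_{u,c_v}`. -/
theorem stmt_3 (N C : ℕ) (hN : 0 < N) (hC : 0 < C)
    (A : Matrix (Fin N) (Fin N) ℝ)
    (hA_rowsum : ∀ i, ∑ j, A i j = 1)
    (lab : Fin N → Fin C)
    (Z : Matrix (Fin N) (Fin C) ℝ)
    (hZ : ∀ v c, Z v c = if c = lab v then 1 else 0)
    (v u : Fin N) (hvu : lab v ≠ lab u) :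
    ((1 - A) * Z * Zᵀ * (1 - A)ᵀ : Matrix (Fin N) (Fin N) ℝ) v u
      = (∑ c, (A * Z) v c * (A * Z) u c) - (A * Z) v (lab u) - (A * Z) u (lab v) := by
  have key : ((1 - A) * Z * Zᵀ * (1 - A)ᵀ : Matrix (Fin N) (Fin N) ℝ)
      = ((1 - A) * Z) * ((1 - A) * Z)ᵀ := by
    rw [transpose_mul, Matrix.mul_assoc]
  rw [key]
  have hBZ : (1 - A) * Z = Z - A * Z := by
    rw [Matrix.sub_mul, Matrix.one_mul]
  rw [hBZ, mul_apply]
  simp only [transpose_apply, Matrix.sub_apply, hZ]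
  have h1 : ∀ c : Fin C, ((if c = lab v then (1:ℝ) else 0) - (A * Z) v c) *
      ((if c = lab u then (1:ℝ) else 0) - (A * Z) u c)
      = (A * Z) v c * (A * Z) u c
        - (if c = lab u then (A * Z) v c else 0)
        - (if c = lab v then (A * Z) u c else 0) := by
    intro c
    by_cases h1 : c = lab v <;> by_cases h2 : c = lab u <;>
      simp_all <;> ring
  simp only [h1]
  rw [Finset.sum_sub_distrib, Finset.sum_sub_distrib, Finset.sum_ite_eq',
    Finset.sum_ite_eq']
  simp
end

section
/- Let N be a positive natural number, let be an N×N real row-stochastic matrix (all entries nonnegative, every row sums to 1), and let Z be an N×2 one-hot label matrix with classes denoted 1 and 2. Write W = ÂZ. Then for any two indices v, u in different classes (c_v ≠ c_u), the entry of S(I−Â,Z) = (I−Â)ZZᵀ(I−Â)ᵀ at position (v,u) equals W_{v,c_u}·(W_{u,c_u} − 1) + W_{u,c_v}·(W_{v,c_v} − 1), and since all entries of W lie in [0,1], each of the two summands is ≤ 0. -/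
open Matrix Finset

/-- For `C = 2` classes, a row-stochastic `Â` and one-hot `Z`, writing `W = ÂZ`,
for nodes `v, u` in different classes the entry of `S(I−Â,Z) = (I−Â)ZZᵀ(I−Â)ᵀ`
equals `W_{v,c_u}(W_{u,c_u} − 1) + W_{u,c_v}(W_{v,c_v} − 1)`, and each of the two
summands is nonpositive since all entries of `W` lie in `[0,1]`. -/
theorem stmt_17 (N : ℕ) (hN : 0 < N)
    (A : Matrix (Fin N) (Fin N) ℝ)
    (hA_nonneg : ∀ i j, 0 ≤ A i j)
    (hA_rowsum : ∀ i, ∑ j, A i j = 1)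
    (lab : Fin N → Fin 2)
    (Z : Matrix (Fin N) (Fin 2) ℝ)
    (hZ : ∀ v c, Z v c = if c = lab v then 1 else 0)
    (v u : Fin N) (hvu : lab v ≠ lab u) :
    ((1 - A) * Z * Zᵀ * (1 - A)ᵀ : Matrix (Fin N) (Fin N) ℝ) v u
        = (A * Z) v (lab u) * ((A * Z) u (lab u) - 1)
          + (A * Z) u (lab v) * ((A * Z) v (lab v) - 1)
      ∧ (A * Z) v (lab u) * ((A * Z) u (lab u) - 1) ≤ 0
      ∧ (A * Z) u (lab v) * ((A * Z) v (lab v) - 1) ≤ 0 := by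
  have hW0 : ∀ (i : Fin N) (c : Fin 2), 0 ≤ (A * Z) i c := by
    intro i c
    rw [Matrix.mul_apply]
    refine Finset.sum_nonneg fun j _ => mul_nonneg (hA_nonneg i j) ?_
    rw [hZ]; split <;> norm_num
  have hW1 : ∀ (i : Fin N) (c : Fin 2), (A * Z) i c ≤ 1 := by
    intro i c
    rw [Matrix.mul_apply]
    calc ∑ j, A i j * Z j c ≤ ∑ j, A i j := by
          refine Finset.sum_le_sum fun j _ => ?_
          have hz1 : Z j c ≤ 1 := by rw [hZ]; split <;> norm_num
          calc A i j * Z j c ≤ A i j * 1 := by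
                exact mul_le_mul_of_nonneg_left hz1 (hA_nonneg i j)
            _ = A i j := mul_one _
      _ = 1 := hA_rowsum i
  refine ⟨?_, ?_, ?_⟩
  · have hBB : ((1 - A) * Z * Zᵀ * (1 - A)ᵀ : Matrix (Fin N) (Fin N) ℝ)
        = ((1 - A) * Z) * ((1 - A) * Z)ᵀ := by
      rw [Matrix.transpose_mul, Matrix.mul_assoc]
    rw [hBB, Matrix.mul_apply]
    have hB : ∀ (i : Fin N) (c : Fin 2),
        ((1 - A) * Z : Matrix (Fin N) (Fin 2) ℝ) i c = Z i c - (A * Z) i c := by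
      intro i c
      rw [Matrix.sub_mul, Matrix.one_mul, Matrix.sub_apply]
    simp only [Matrix.transpose_apply, hB, Fin.sum_univ_two]
    have hpair : ∀ x : Fin 2, x = 0 ∨ x = 1 := by decide
    rcases hpair (lab v) with h1 | h1 <;> rcases hpair (lab u) with h2 | h2 <;>
      rw [h1, h2] at hvu ⊢ <;>
      first
        | exact absurd rfl hvu
        | (simp only [hZ, h1, h2]; norm_num; ring)
  · exact mul_nonpos_of_nonneg_of_nonpos (hW0 v (lab u)) (by linarith [hW1 u (lab u)])
  · exact mul_nonpos_of_nonneg_of_nonpos (hW0 u (lab v)) (by linarith [hW1 v (lab v)])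
end
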